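/- Let m be a discrete m-function with continued fraction coefficients {(a_n,b_n)}_{n≥1} and stripping sequence (m_n)_{n≥0}. Then for every L ≥ 1 and every z ∈ ℂ₊, the coefficient stripping formula holds: m_L(z) · (−a_L)(p_{L−1}(z)m(z) + q_{L−1}(z)) = p_L(z)m(z) + q_L(z), where p_L(z) = p_L(z;{a_j,b_j}_{j=1}^L) and similarly for q_L, p_{L−1}, q_{L−1}; equivalently, m_L(z) = (p_L(z)m(z) + q_L(z)) / (−a_L(p_{L−1}(z)m(z) + q_{L−1}(z))). -/

import Mathlib

open MeasureTheory Polynomial Filter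

noncomputable section

/-- A discrete m-function: the Cauchy transform of a compactly supported
probability measure on `ℝ`, viewed as a function on the upper half plane
`ℂ₊ = {z : 0 < z.im}`. -/
def IsDiscreteMFunction (m : ℂ → ℂ) : Prop :=
  ∃ ρ : Measure ℝ, IsProbabilityMeasure ρ ∧ (∃ t : ℝ, ρ (Set.Icc (-t) t) = 1) ∧
    ∀ z : ℂ, 0 < z.im → m z = ∫ x : ℝ, ((x : ℂ) - z)⁻¹ ∂ρ

/-- `m` has continued fraction (Jacobi) coefficients `{(a n, b n)}_{n ≥ 1}`
(sequences indexed from 1; index 0 unused) with stripping sequence `ms`. -/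
def HasJacobiCoeffs (m : ℂ → ℂ) (a b : ℕ → ℝ) (ms : ℕ → ℂ → ℂ) : Prop :=
  ms 0 = m ∧ (∀ n, IsDiscreteMFunction (ms n)) ∧
    ∀ n, ∀ z : ℂ, 0 < z.im →
      ms n z = ((b (n + 1) : ℂ) - z - (a (n + 1) : ℂ) ^ 2 * ms (n + 1) z)⁻¹

/-- Shifted first-kind polynomials: `pShift a b (j+1) = p_j(·; {a_i, b_i}_{i=1}^j)`,
so `pShift a b 0 = p₋₁ = 0`, `pShift a b 1 = p₀ = 1`, and the recurrence
`z p_j = a_{j+1} p_{j+1} + b_{j+1} p_j + a_j p_{j-1}` holds. -/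
def pShift (a b : ℕ → ℝ) : ℕ → ℂ → ℂ
  | 0 => fun _ => 0
  | 1 => fun _ => 1
  | (n + 2) => fun z =>
      ((z - (b (n + 1) : ℂ)) * pShift a b (n + 1) z - (a n : ℂ) * pShift a b n z) /
        (a (n + 1) : ℂ)

/-- The first-kind polynomial `p_n(z; {a_j, b_j}_{j=1}^n)`. -/
def firstKind (a b : ℕ → ℝ) (n : ℕ) : ℂ → ℂ := pShift a b (n + 1)

/-- The second-kind polynomial `q_n(z; {a_j, b_j}_{j=1}^n) = a₁⁻¹ p_{n-1}(z; {a_j, b_j}_{j=2}^n)`,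
with `q₀ = 0`. -/
def secondKind (a b : ℕ → ℝ) (n : ℕ) : ℂ → ℂ :=
  fun z => ((a 1 : ℂ))⁻¹ * pShift (fun j => a (j + 1)) (fun j => b (j + 1)) n z

/-- The conjugated transfer matrix `T_n = [[p_n, q_n], [-a_n p_{n-1}, -a_n q_{n-1}]]`
of the parameters `(a_j, b_j)_{j=1}^n`. -/
def ctm (a b : ℕ → ℝ) (n : ℕ) : Matrix (Fin 2) (Fin 2) (ℂ → ℂ) :=
  !![firstKind a b n, secondKind a b n;
     (fun z => -(a n : ℂ) * firstKind a b (n - 1) z),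
     (fun z => -(a n : ℂ) * secondKind a b (n - 1) z)]

/-- The finite string `(s (start+1), …, s (start+len))` is a palindrome. -/
def PalSeg {α : Type*} (s : ℕ → α) (start len : ℕ) : Prop :=
  ∀ i, 1 ≤ i → i ≤ len → s (start + i) = s (start + (len + 1 - i))

/-- The pair of `p`-periodic sequences `(a, b)` is doubly palindromic with period `p`
and first length `ℓ` (`1 ≤ ℓ ≤ p - 2`): `(a₁,…,a_ℓ)` and `(a_{ℓ+1},…,a_p)` are palindromes,
and `(b₁,…,b_{ℓ+1})` and `(b_{ℓ+2},…,b_p)` are palindromes. -/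
def DoublyPalindromic (a b : ℕ → ℝ) (p ℓ : ℕ) : Prop :=
  1 ≤ ℓ ∧ ℓ + 2 ≤ p ∧
    PalSeg a 0 ℓ ∧ PalSeg a ℓ (p - ℓ) ∧
    PalSeg b 0 (ℓ + 1) ∧ PalSeg b (ℓ + 1) (p - (ℓ + 1))

lemma mfun_ne_zero {f : ℂ → ℂ} (hf : IsDiscreteMFunction f) {z : ℂ} (hz : 0 < z.im) :
    f z ≠ 0 := by
  obtain ⟨ρ, hprob, -, hrep⟩ := hf
  have hne : ∀ x : ℝ, ((x : ℂ) - z) ≠ 0 := by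
    intro x h
    have h2 : ((x : ℂ) - z).im = 0 := by rw [h]; simp
    simp [Complex.sub_im] at h2
    linarith
  have hcont : Continuous fun x : ℝ => ((x : ℂ) - z)⁻¹ :=
    (Complex.continuous_ofReal.sub continuous_const).inv₀ hne
  have hbound : ∀ x : ℝ, ‖((x : ℂ) - z)⁻¹‖ ≤ (z.im)⁻¹ := by
    intro x
    rw [norm_inv]
    apply inv_anti₀ hz
    calc z.im = |((x : ℂ) - z).im| := by simp [Complex.sub_im, abs_of_nonneg hz.le]
    _ ≤ ‖(x : ℂ) - z‖ := Complex.abs_im_le_norm _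
    _ = ‖(x : ℂ) - z‖ := rfl
  have hint : Integrable (fun x : ℝ => ((x : ℂ) - z)⁻¹) ρ :=
    Integrable.mono' (integrable_const (z.im)⁻¹) hcont.aestronglyMeasurable
      (Filter.Eventually.of_forall hbound)
  have himpos : ∀ x : ℝ, 0 < (((x : ℂ) - z)⁻¹).im := by
    intro x
    rw [Complex.inv_im]
    have h1 : 0 < Complex.normSq ((x : ℂ) - z) := Complex.normSq_pos.mpr (hne x)
    have h2 : ((x : ℂ) - z).im = -z.im := by simp
    rw [h2, neg_neg]
    exact div_pos hz h1
  have hswap : (∫ x : ℝ, ((x : ℂ) - z)⁻¹ ∂ρ).im = ∫ x : ℝ, (((x : ℂ) - z)⁻¹).im ∂ρ :=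
    (Complex.imCLM.integral_comp_comm hint).symm
  have him : 0 < (f z).im := by
    rw [hrep z hz, hswap]
    rw [integral_pos_iff_support_of_nonneg (fun x => (himpos x).le) hint.im]
    have h3 : Function.support (fun x : ℝ => (((x : ℂ) - z)⁻¹).im) = Set.univ := by
      ext x
      simp only [Function.mem_support, Set.mem_univ, iff_true]
      exact (himpos x).ne'
    rw [h3]
    simp [hprob.measure_univ]
  intro h0
  rw [h0] at him
  simp at him

lemma fk_rec (a b : ℕ → ℝ) (k : ℕ) (z : ℂ) :
    firstKind a b (k + 2) z =
      ((z - (b (k + 2) : ℂ)) * firstKind a b (k + 1) z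
        - (a (k + 1) : ℂ) * firstKind a b k z) / (a (k + 2) : ℂ) := by
  show pShift a b (k + 1 + 2) z = _
  simp only [pShift]
  rfl

lemma sk_rec (a b : ℕ → ℝ) (k : ℕ) (z : ℂ) :
    secondKind a b (k + 2) z =
      ((z - (b (k + 2) : ℂ)) * secondKind a b (k + 1) z
        - (a (k + 1) : ℂ) * secondKind a b k z) / (a (k + 2) : ℂ) := by
  unfold secondKind
  simp only [pShift]
  ring

/-- **Coefficient stripping formula.** If `m` has Jacobi coefficients `(a, b)` with
stripping sequence `(m_n)`, then for all `L ≥ 1` and `z ∈ ℂ₊`,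
`m_L(z) · (-a_L)(p_{L-1}(z)m(z) + q_{L-1}(z)) = p_L(z)m(z) + q_L(z)`. -/
theorem coefficient_stripping
    (m : ℂ → ℂ) (a b : ℕ → ℝ) (ms : ℕ → ℂ → ℂ)
    (hapos : ∀ n, 1 ≤ n → 0 < a n)
    (hm : IsDiscreteMFunction m) (hcoef : HasJacobiCoeffs m a b ms) :
    ∀ L, 1 ≤ L → ∀ z : ℂ, 0 < z.im →
      ms L z * (-(a L : ℂ)) *
          (firstKind a b (L - 1) z * m z + secondKind a b (L - 1) z) =
        firstKind a b L z * m z + secondKind a b L z := by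
  obtain ⟨hms0, hmfun, hstrip⟩ := hcoef
  intro L hL z hz
  induction L, hL using Nat.le_induction with
  | base =>
    have ha1 : (a 1 : ℂ) ≠ 0 := by exact_mod_cast (hapos 1 le_rfl).ne'
    have hD : m z * ((b 1 : ℂ) - z - (a 1 : ℂ) ^ 2 * ms 1 z) = 1 := by
      have h := hstrip 0 z hz
      rw [hms0] at h
      have hne : ((b 1 : ℂ) - z - (a 1 : ℂ) ^ 2 * ms 1 z) ≠ 0 := by
        intro h0
        have hmz := mfun_ne_zero hm hz
        rw [h, h0] at hmz
        simp at hmz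
      rw [h]
      exact inv_mul_cancel₀ hne
    have e0 : firstKind a b 0 z = 1 := rfl
    have e1 : firstKind a b 1 z = (z - (b 1 : ℂ)) / (a 1 : ℂ) := by
      show pShift a b 2 z = _
      simp [pShift]
    have e2 : secondKind a b 0 z = 0 := by simp [secondKind, pShift]
    have e3 : secondKind a b 1 z = ((a 1 : ℂ))⁻¹ := by simp [secondKind, pShift]
    show ms 1 z * _ * (firstKind a b 0 z * m z + secondKind a b 0 z) = _
    rw [e0, e1, e2, e3]
    field_simp
    linear_combination hD
  | succ n hn IH =>
    obtain ⟨k, rfl⟩ : ∃ k, n = k + 1 := ⟨n - 1, by omega⟩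
    have ha1 : (a (k + 1) : ℂ) ≠ 0 := by exact_mod_cast (hapos (k + 1) (by omega)).ne'
    have ha2 : (a (k + 2) : ℂ) ≠ 0 := by exact_mod_cast (hapos (k + 2) (by omega)).ne'
    have hD : ms (k + 1) z * ((b (k + 2) : ℂ) - z - (a (k + 2) : ℂ) ^ 2 * ms (k + 2) z) = 1 := by
      have h := hstrip (k + 1) z hz
      have hne : ((b (k + 2) : ℂ) - z - (a (k + 2) : ℂ) ^ 2 * ms (k + 2) z) ≠ 0 := by
        intro h0
        have hmz := mfun_ne_zero (hmfun (k + 1)) hz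
        rw [h, h0] at hmz
        simp at hmz
      rw [h]
      exact inv_mul_cancel₀ hne
    simp only [Nat.add_sub_cancel] at IH ⊢
    rw [fk_rec, sk_rec]
    simp only [show k + 1 + 1 = k + 2 from rfl]
    field_simp
    linear_combination (-(a (k + 1) : ℂ) *
          (firstKind a b k z * m z + secondKind a b k z)) * hD -
        (((b (k + 2) : ℂ) - z - (a (k + 2) : ℂ) ^ 2 * ms (k + 2) z)) * IH
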